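/- Let n ≥ 2 and work in ℚ^n with standard basis e_1, …, e_n. Define α_i = e_i − e_{i+1} for 1 ≤ i ≤ n−1 and α_n = 2e_n. Then (α_1, …, α_n) is a basis of ℚ^n, and for every integer k with 1 ≤ k ≤ n, the number of elements of the set Φ⁺ = {2e_i : 1 ≤ i ≤ n} ∪ {e_i − e_j : 1 ≤ i < j ≤ n} ∪ {e_i + e_j : 1 ≤ i < j ≤ n} whose coordinate at α_k in this basis equals 0 is (n−k) + k(k−1)/2 + (n−k)(n−1−k). -/

import Mathlib

open Finset

section
variable (n : ℕ)

noncomputable def ww (i : Fin n) : ℚ := if i.1 + 1 < n then 1 else 2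

noncomputable def AA : Matrix (Fin n) (Fin n) ℚ :=
  fun j i => if j = i then ww n i else if j.1 = i.1 + 1 then -1 else 0

lemma AA_lower : (AA n).BlockTriangular ⇑OrderDual.toDual := by
  intro i j h
  have h' : (i : Fin n) < j := h
  have hv : i.1 < j.1 := h'
  simp only [AA, Fin.ext_iff]
  split_ifs <;> first | rfl | (exfalso; omega)

lemma AA_det_ne : (AA n).det ≠ 0 := by
  rw [Matrix.det_of_lowerTriangular _ (AA_lower n)]
  refine Finset.prod_ne_zero_iff.mpr fun i _ => ?_
  simp only [AA, if_pos rfl, ww]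
  split_ifs <;> norm_num

noncomputable def invAA : Invertible (AA n) :=
  (AA n).invertibleOfIsUnitDet (isUnit_iff_ne_zero.mpr (AA_det_ne n))

noncomputable def ee : (Fin n → ℚ) ≃ₗ[ℚ] (Fin n → ℚ) := (AA n).toLinearEquiv' (invAA n)

noncomputable def BB : Module.Basis (Fin n) ℚ (Fin n → ℚ) := (Pi.basisFun ℚ (Fin n)).map (ee n)

lemma BB_apply (i : Fin n) :
    BB n i = if h : i.val + 1 < n
      then (Pi.single i 1 : Fin n → ℚ) - Pi.single (⟨i.val + 1, h⟩ : Fin n) 1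
      else (2 : ℚ) • (Pi.single i 1 : Fin n → ℚ) := by
  have h1 : BB n i = (ee n) (Pi.single i 1) := by
    simp [BB, Module.Basis.map_apply, Pi.basisFun_apply]
  have he : (ee n) (Pi.single i 1) = (AA n).mulVec (Pi.single i 1) := rfl
  rw [h1, he, Matrix.mulVec_single]
  have hi := i.isLt
  split
  · next h =>
    funext j
    have hj := j.isLt
    simp only [AA, ww, Pi.sub_apply, Pi.smul_apply, Matrix.col_apply, op_smul_eq_mul, Pi.single_apply, mul_one, Fin.ext_iff]
    split_ifs <;> first | (exfalso; omega) | norm_num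
  · next h =>
    funext j
    have hj := j.isLt
    simp only [AA, ww, Pi.smul_apply, Matrix.col_apply, op_smul_eq_mul, Pi.single_apply, smul_eq_mul, mul_one, Fin.ext_iff]
    split_ifs <;> first | (exfalso; omega) | norm_num
def vv (v : Fin n → ℚ) (m : ℕ) : ℚ := if h : m < n then v ⟨m, h⟩ else 0

noncomputable def gg (v : Fin n → ℚ) (k : Fin n) : ℚ :=
  (if k.1 + 1 < n then 1 else 1/2) * ∑ l ∈ range (k.1 + 1), vv n v l

lemma ww_mul_gg (v : Fin n → ℚ) (j : Fin n) :
    ww n j * gg n v j = ∑ l ∈ range (j.1 + 1), vv n v l := by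
  unfold ww gg
  split_ifs <;> ring

lemma mulVec_gg (v : Fin n → ℚ) : (AA n).mulVec (gg n v) = v := by
  funext j
  have hj := j.isLt
  have hsplit : ∀ i : Fin n, AA n j i * gg n v i =
      (if i = j then ww n j * gg n v i else 0) +
      (if i.1 + 1 = j.1 then -(gg n v i) else 0) := by
    intro i
    simp only [AA]
    by_cases h1 : j = i
    · subst h1
      rw [if_pos rfl, if_pos rfl, if_neg (by omega : ¬ (j.1 + 1 = j.1))]; ring
    · have h1' : ¬ i = j := fun e => h1 e.symm
      rw [if_neg h1, if_neg h1']
      by_cases h2 : i.1 + 1 = j.1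
      · rw [if_pos h2.symm, if_pos h2]; ring
      · rw [if_neg (fun e => h2 e.symm), if_neg h2]; ring
  have hmv : (AA n).mulVec (gg n v) j = ∑ i : Fin n, AA n j i * gg n v i := by
    simp [Matrix.mulVec, dotProduct]
  rw [hmv, Finset.sum_congr rfl (fun i _ => hsplit i), Finset.sum_add_distrib,
    Finset.sum_ite_eq' univ j (fun i => ww n j * gg n v i), if_pos (mem_univ j),
    ww_mul_gg]
  rcases Nat.eq_zero_or_pos j.1 with h0 | hpos
  · have hz : (∑ i : Fin n, if i.1 + 1 = j.1 then -(gg n v i) else 0) = 0 :=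
      Finset.sum_eq_zero fun i _ => by rw [if_neg (by omega)]
    rw [hz, h0, add_zero, Finset.sum_range_one]
    show vv n v 0 = v j
    unfold vv
    rw [dif_pos (by omega : (0:ℕ) < n)]
    congr 1
    exact Fin.ext h0.symm
  · obtain ⟨m, hm⟩ : ∃ m, j.1 = m + 1 := ⟨j.1 - 1, by omega⟩
    have hmn : m + 1 < n := by omega
    have hmn' : m < n := by omega
    have hpt : ∀ i : Fin n, (if i.1 + 1 = j.1 then -(gg n v i) else 0) =
        (if i = ⟨m, hmn'⟩ then -(gg n v i) else 0) := by
      intro i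
      by_cases h : i.1 + 1 = j.1
      · rw [if_pos h, if_pos (Fin.ext (by simpa [hm] using h))]
      · rw [if_neg h, if_neg (fun e => h (by rw [e, hm]))]
    have h2 : (∑ i : Fin n, if i.1 + 1 = j.1 then -(gg n v i) else 0)
        = -(gg n v ⟨m, hmn'⟩) := by
      rw [Finset.sum_congr rfl (fun i _ => hpt i),
        Finset.sum_ite_eq' univ (⟨m, hmn'⟩ : Fin n) (fun i => -(gg n v i)),
        if_pos (mem_univ _)]
    rw [h2]
    have hg : gg n v ⟨m, hmn'⟩ = ∑ l ∈ range (m + 1), vv n v l := by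
      unfold gg
      rw [if_pos (show (⟨m, hmn'⟩ : Fin n).1 + 1 < n from hmn)]
      ring
    rw [hg, hm, Finset.sum_range_succ]
    have hv : vv n v (m + 1) = v j := by
      unfold vv
      rw [dif_pos (hm ▸ hj)]
      congr 1
      exact Fin.ext hm.symm
    rw [hv]; ring
lemma BB_repr (v : Fin n → ℚ) (k : Fin n) : (BB n).repr v k = gg n v k := by
  have h1 : (BB n).repr v k = ((ee n).symm v) k := by
    simp [BB, Module.Basis.map_repr, Pi.basisFun_repr]
  have h2 : (ee n).symm v = gg n v := by
    rw [LinearEquiv.symm_apply_eq]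
    exact (mulVec_gg n v).symm
  rw [h1, h2]

lemma repr_zero_iff (v : Fin n → ℚ) (k : Fin n) :
    (BB n).repr v k = 0 ↔ (∑ l ∈ range (k.1 + 1), vv n v l) = 0 := by
  rw [BB_repr]
  unfold gg
  have hfac : (if k.1 + 1 < n then (1:ℚ) else 1/2) ≠ 0 := by
    split_ifs <;> norm_num
  rw [mul_eq_zero, or_iff_right hfac]

lemma sum_vv_single (i : Fin n) (c : ℚ) (t : ℕ) :
    ∑ l ∈ range t, vv n (Pi.single i c) l = if i.1 < t then c else 0 := by
  have h : ∀ m, vv n (Pi.single i c) m = if i.1 = m then c else 0 := by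
    intro m
    by_cases hmn : m < n
    · rw [vv, dif_pos hmn, Pi.single_apply]
      by_cases he : i.1 = m
      · rw [if_pos (Fin.ext he.symm), if_pos he]
      · rw [if_neg (fun e => he (congrArg Fin.val e).symm), if_neg he]
    · rw [vv, dif_neg hmn, if_neg (by have := i.isLt; omega)]
  rw [Finset.sum_congr rfl (fun m _ => h m), Finset.sum_ite_eq (range t) i.1 (fun _ => c)]
  simp [Finset.mem_range]

lemma vv_sub (a b : Fin n → ℚ) (m : ℕ) : vv n (a - b) m = vv n a m - vv n b m := by
  unfold vv; split_ifs <;> simp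

lemma vv_add (a b : Fin n → ℚ) (m : ℕ) : vv n (a + b) m = vv n a m + vv n b m := by
  unfold vv; split_ifs <;> simp

lemma vv_smul (c : ℚ) (a : Fin n → ℚ) (m : ℕ) : vv n (c • a) m = c * vv n a m := by
  unfold vv; split_ifs <;> simp

lemma cond1 (i : Fin n) (k : Fin n) :
    ((BB n).repr ((2 : ℚ) • (Pi.single i 1 : Fin n → ℚ)) k = 0) ↔ k.1 < i.1 := by
  rw [repr_zero_iff]
  rw [Finset.sum_congr rfl (fun m _ => vv_smul n 2 _ m), ← Finset.mul_sum, sum_vv_single]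
  split_ifs with h
  · constructor
    · intro he; norm_num at he
    · omega
  · constructor
    · intro _; omega
    · intro _; norm_num

lemma cond2 (p : Fin n × Fin n) (k : Fin n) :
    ((BB n).repr ((Pi.single p.1 1 : Fin n → ℚ) - Pi.single p.2 1) k = 0) ↔
      (p.1.1 ≤ k.1 ↔ p.2.1 ≤ k.1) := by
  rw [repr_zero_iff]
  rw [Finset.sum_congr rfl (fun m _ => vv_sub n _ _ m), Finset.sum_sub_distrib,
    sum_vv_single, sum_vv_single]
  split_ifs <;> constructor <;> intro h <;> first | omega | norm_num at h ⊢ | simp_all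
  all_goals omega

lemma cond3 (p : Fin n × Fin n) (k : Fin n) :
    ((BB n).repr ((Pi.single p.1 1 : Fin n → ℚ) + Pi.single p.2 1) k = 0) ↔
      (k.1 < p.1.1 ∧ k.1 < p.2.1) := by
  rw [repr_zero_iff]
  rw [Finset.sum_congr rfl (fun m _ => vv_add n _ _ m), Finset.sum_add_distrib,
    sum_vv_single, sum_vv_single]
  split_ifs <;> constructor <;> intro h <;> first | omega | norm_num at h ⊢ | simp_all
  all_goals omega

lemma card_prod_filter (R : Fin n × Fin n → Prop) [DecidablePred R] :
    (univ.filter R).card = ∑ i : Fin n, (univ.filter fun j => R (i, j)).card := by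
  rw [Finset.card_filter, Fintype.sum_prod_type]
  exact Finset.sum_congr rfl fun i _ => (Finset.card_filter _ _).symm

lemma card_fin_val (P : Fin n → Prop) [DecidablePred P] (Q : ℕ → Prop) [DecidablePred Q]
    (h : ∀ i : Fin n, P i ↔ Q i.1) :
    (univ.filter P).card = ((range n).filter Q).card := by
  rw [Finset.card_filter, Finset.card_filter,
    ← Fin.sum_univ_eq_sum_range (fun m => if Q m then 1 else 0) n]
  exact Finset.sum_congr rfl fun i _ => by simp [h i]

lemma cnt1 (K : ℕ) (hK : K < n) :
    (univ.filter fun i : Fin n => K < i.1).card = n - (K + 1) := by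
  rw [card_fin_val n _ (fun m => K < m) (fun i => Iff.rfl)]
  have h : (range n).filter (fun m => K < m) = Ico (K + 1) n := by
    ext m; simp [mem_Ico]; omega
  rw [h, Nat.card_Ico]

lemma cnt2 (K : ℕ) (hK : K < n) :
    2 * (univ.filter fun p : Fin n × Fin n => p.1 < p.2 ∧ p.2.1 ≤ K).card = (K + 1) * K := by
  rw [card_prod_filter]
  have hin : ∀ i : Fin n, (univ.filter fun j : Fin n => (i, j).1 < (i, j).2 ∧ (i, j).2.1 ≤ K).card = K - i.1 := by
    intro i
    show (univ.filter fun j : Fin n => i.1 < j.1 ∧ j.1 ≤ K).card = K - i.1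
    rw [card_fin_val n _ (fun m => i.1 < m ∧ m ≤ K) (fun j => Iff.rfl)]
    have h : (range n).filter (fun m => i.1 < m ∧ m ≤ K) = Ico (i.1 + 1) (K + 1) := by
      ext m; simp [mem_Ico]; omega
    rw [h, Nat.card_Ico]
    omega
  rw [Finset.sum_congr rfl (fun i _ => hin i), Fin.sum_univ_eq_sum_range (fun m => K - m) n]
  have h1 : ∑ m ∈ range n, (K - m) = ∑ m ∈ range (K + 1), (K - m) := by
    symm
    apply Finset.sum_subset (range_subset_range.mpr (by omega))
    intro m _ hm
    simp only [mem_range] at hm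
    omega
  have h2 : ∑ m ∈ range (K + 1), (K - m) = ∑ m ∈ range (K + 1), m := by
    have := Finset.sum_range_reflect (fun m => m) (K + 1)
    simpa using this
  rw [h1, h2, mul_comm, sum_range_id_mul_two]
  simp

lemma cnt3 (K : ℕ) (hK : K < n) :
    2 * (univ.filter fun p : Fin n × Fin n => p.1 < p.2 ∧ K < p.1.1).card
      = (n - 1 - K) * (n - 1 - K - 1) := by
  rw [card_prod_filter]
  have hin : ∀ i : Fin n, (univ.filter fun j : Fin n => (i, j).1 < (i, j).2 ∧ K < (i, j).1.1).card
      = (if K < i.1 then n - 1 - i.1 else 0) := by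
    intro i
    show (univ.filter fun j : Fin n => i.1 < j.1 ∧ K < i.1).card = (if K < i.1 then n - 1 - i.1 else 0)
    rw [card_fin_val n _ (fun m => i.1 < m ∧ K < i.1) (fun j => Iff.rfl)]
    by_cases h : K < i.1
    · have he : (range n).filter (fun m => i.1 < m ∧ K < i.1) = Ico (i.1 + 1) n := by
        ext m; simp [mem_Ico]; omega
      rw [he, Nat.card_Ico, if_pos h]
      omega
    · have he : (range n).filter (fun m => i.1 < m ∧ K < i.1) = ∅ := by
        ext m; simp; omega
      rw [he, if_neg h]
      simp
  rw [Finset.sum_congr rfl (fun i _ => hin i),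
    Fin.sum_univ_eq_sum_range (fun m => if K < m then n - 1 - m else 0) n]
  have h1 : ∑ j ∈ range n, (if K < j then n - 1 - j else 0)
      = ∑ j ∈ range n, (if j < n - 1 - K then j else 0) := by
    rw [← Finset.sum_range_reflect (fun m => if K < m then n - 1 - m else 0) n]
    apply Finset.sum_congr rfl
    intro j hj
    simp only [mem_range] at hj
    by_cases h : j < n - 1 - K
    · rw [if_pos (by omega), if_pos h]
      omega
    · rw [if_neg (by omega), if_neg h]
  have h2 : ∑ j ∈ range n, (if j < n - 1 - K then j else 0) = ∑ j ∈ range (n - 1 - K), j := by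
    rw [← Finset.sum_filter]
    apply Finset.sum_congr _ (fun _ _ => rfl)
    ext m; simp; omega
  rw [h1, h2, mul_comm, sum_range_id_mul_two]

lemma inj1 : Set.InjOn (fun i : Fin n => (2:ℚ) • (Pi.single i 1 : Fin n → ℚ)) Set.univ := by
  intro a _ b _ h
  have ha := congrFun h a
  simp only [Pi.smul_apply, Pi.single_apply, smul_eq_mul, Fin.ext_iff] at ha
  rw [Fin.ext_iff]
  split_ifs at ha <;> first | assumption | norm_num at ha

lemma inj2 : Set.InjOn (fun p : Fin n × Fin n => (Pi.single p.1 1 : Fin n → ℚ) - Pi.single p.2 1)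
    ↑(univ.filter fun p : Fin n × Fin n => p.1 < p.2) := by
  intro p hp q hq h
  simp only [coe_filter, Set.mem_setOf_eq, mem_univ, true_and, Fin.lt_def] at hp hq
  have hA := congrFun h p.1
  have hB := congrFun h p.2
  simp only [Pi.sub_apply, Pi.single_apply, Fin.ext_iff] at hA hB
  rw [Prod.ext_iff, Fin.ext_iff, Fin.ext_iff]
  split_ifs at hA hB <;> (try norm_num at hA) <;> (try norm_num at hB) <;> omega

lemma inj3 : Set.InjOn (fun p : Fin n × Fin n => (Pi.single p.1 1 : Fin n → ℚ) + Pi.single p.2 1)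
    ↑(univ.filter fun p : Fin n × Fin n => p.1 < p.2) := by
  intro p hp q hq h
  simp only [coe_filter, Set.mem_setOf_eq, mem_univ, true_and, Fin.lt_def] at hp hq
  have hA := congrFun h p.1
  have hB := congrFun h p.2
  simp only [Pi.add_apply, Pi.single_apply, Fin.ext_iff] at hA hB
  rw [Prod.ext_iff, Fin.ext_iff, Fin.ext_iff]
  split_ifs at hA hB <;> (try norm_num at hA) <;> (try norm_num at hB) <;> omega

lemma disj12 : Disjoint
    (univ.image fun i : Fin n => (2:ℚ) • (Pi.single i 1 : Fin n → ℚ))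
    ((univ.filter fun p : Fin n × Fin n => p.1 < p.2).image
      fun p => (Pi.single p.1 1 : Fin n → ℚ) - Pi.single p.2 1) := by
  rw [Finset.disjoint_left]
  rintro v h1 h2
  simp only [mem_image, mem_univ, true_and, mem_filter, Fin.lt_def] at h1 h2
  obtain ⟨i, hi⟩ := h1
  obtain ⟨p, hp, hpv⟩ := h2
  have h := congrFun (hi.trans hpv.symm) p.1
  simp only [Pi.smul_apply, Pi.sub_apply, Pi.single_apply, smul_eq_mul, Fin.ext_iff] at h
  split_ifs at h <;> norm_num at h <;> omega

lemma disj13 : Disjoint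
    (univ.image fun i : Fin n => (2:ℚ) • (Pi.single i 1 : Fin n → ℚ))
    ((univ.filter fun p : Fin n × Fin n => p.1 < p.2).image
      fun p => (Pi.single p.1 1 : Fin n → ℚ) + Pi.single p.2 1) := by
  rw [Finset.disjoint_left]
  rintro v h1 h2
  simp only [mem_image, mem_univ, true_and, mem_filter, Fin.lt_def] at h1 h2
  obtain ⟨i, hi⟩ := h1
  obtain ⟨p, hp, hpv⟩ := h2
  have h := congrFun (hi.trans hpv.symm) p.2
  simp only [Pi.smul_apply, Pi.add_apply, Pi.single_apply, smul_eq_mul, Fin.ext_iff] at h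
  split_ifs at h <;> norm_num at h <;> omega

lemma disj23 : Disjoint
    ((univ.filter fun p : Fin n × Fin n => p.1 < p.2).image
      fun p => (Pi.single p.1 1 : Fin n → ℚ) - Pi.single p.2 1)
    ((univ.filter fun p : Fin n × Fin n => p.1 < p.2).image
      fun p => (Pi.single p.1 1 : Fin n → ℚ) + Pi.single p.2 1) := by
  rw [Finset.disjoint_left]
  rintro v h1 h2
  simp only [mem_image, mem_univ, true_and, mem_filter, Fin.lt_def] at h1 h2
  obtain ⟨p, hp, hpv⟩ := h1
  obtain ⟨q, hq, hqv⟩ := h2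
  have hA := congrFun (hpv.trans hqv.symm) q.1
  have hB := congrFun (hpv.trans hqv.symm) q.2
  simp only [Pi.sub_apply, Pi.add_apply, Pi.single_apply, Fin.ext_iff] at hA hB
  split_ifs at hA hB <;> (try norm_num at hA) <;> (try norm_num at hB) <;> omega

lemma cntDiff (K : ℕ) (hK : K < n) :
    (univ.filter fun p : Fin n × Fin n => p.1 < p.2 ∧ (p.1.1 ≤ K ↔ p.2.1 ≤ K)).card
      = (univ.filter fun p : Fin n × Fin n => p.1 < p.2 ∧ p.2.1 ≤ K).card
        + (univ.filter fun p : Fin n × Fin n => p.1 < p.2 ∧ K < p.1.1).card := by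
  have h1 : (univ.filter fun p : Fin n × Fin n => p.1 < p.2 ∧ (p.1.1 ≤ K ↔ p.2.1 ≤ K))
      = (univ.filter fun p : Fin n × Fin n =>
          (p.1 < p.2 ∧ p.2.1 ≤ K) ∨ (p.1 < p.2 ∧ K < p.1.1)) := by
    apply Finset.filter_congr
    intro p _
    simp only [Fin.lt_def]
    omega
  rw [h1, Finset.filter_or, Finset.card_union_of_disjoint]
  rw [Finset.disjoint_left]
  intro p hp1 hp2
  simp only [mem_filter, Fin.lt_def] at hp1 hp2
  omega
end

theorem stmt_14 (n : ℕ) (hn : 2 ≤ n) :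
    ∃ B : Module.Basis (Fin n) ℚ (Fin n → ℚ),
      (∀ i : Fin n,
        B i = if h : i.val + 1 < n
          then (Pi.single i 1 : Fin n → ℚ) - Pi.single (⟨i.val + 1, h⟩ : Fin n) 1
          else (2 : ℚ) • (Pi.single i 1 : Fin n → ℚ)) ∧
      ∀ k : Fin n,
        ((((Finset.univ.image fun i : Fin n => (2 : ℚ) • (Pi.single i 1 : Fin n → ℚ)) ∪
          ((Finset.univ.filter fun p : Fin n × Fin n => p.1 < p.2).image
            fun p => (Pi.single p.1 1 : Fin n → ℚ) - Pi.single p.2 1) ∪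
          ((Finset.univ.filter fun p : Fin n × Fin n => p.1 < p.2).image
            fun p => (Pi.single p.1 1 : Fin n → ℚ) + Pi.single p.2 1)).filter
          fun v => B.repr v k = 0).card)
        = (n - (k.val + 1)) + (k.val + 1) * k.val / 2
            + (n - (k.val + 1)) * (n - 1 - (k.val + 1)) := by
  classical
  refine ⟨BB n, fun i => BB_apply n i, fun k => ?_⟩
  set K := k.val with hKdef
  have hK : K < n := k.isLt
  rw [Finset.filter_union, Finset.filter_union]
  rw [Finset.card_union_of_disjoint
      (Finset.disjoint_union_left.mpr
        ⟨Finset.disjoint_filter_filter (disj13 n),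
         Finset.disjoint_filter_filter (disj23 n)⟩),
    Finset.card_union_of_disjoint
      (Finset.disjoint_filter_filter (disj12 n))]
  -- first card
  have hc1 : ((Finset.univ.image fun i : Fin n => (2 : ℚ) • (Pi.single i 1 : Fin n → ℚ)).filter
      fun v => (BB n).repr v k = 0).card = n - (K + 1) := by
    rw [Finset.filter_image,
      Finset.card_image_of_injOn ((inj1 n).mono (Set.subset_univ _))]
    have he : (Finset.univ.filter fun i : Fin n => (BB n).repr ((2 : ℚ) • (Pi.single i 1 : Fin n → ℚ)) k = 0)
        = Finset.univ.filter fun i : Fin n => K < i.1 := by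
      apply Finset.filter_congr
      intro i _
      exact cond1 n i k
    rw [he, cnt1 n K hK]
  -- second card
  have hc2 : (((Finset.univ.filter fun p : Fin n × Fin n => p.1 < p.2).image
        fun p => (Pi.single p.1 1 : Fin n → ℚ) - Pi.single p.2 1).filter
      fun v => (BB n).repr v k = 0).card
      = (univ.filter fun p : Fin n × Fin n => p.1 < p.2 ∧ p.2.1 ≤ K).card
        + (univ.filter fun p : Fin n × Fin n => p.1 < p.2 ∧ K < p.1.1).card := by
    rw [Finset.filter_image, Finset.card_image_of_injOn ((inj2 n).mono (Finset.coe_subset.mpr (Finset.filter_subset _ _)))]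
    rw [Finset.filter_filter]
    have he : (Finset.univ.filter fun p : Fin n × Fin n =>
        p.1 < p.2 ∧ (BB n).repr ((Pi.single p.1 1 : Fin n → ℚ) - Pi.single p.2 1) k = 0)
        = Finset.univ.filter fun p : Fin n × Fin n => p.1 < p.2 ∧ (p.1.1 ≤ K ↔ p.2.1 ≤ K) := by
      apply Finset.filter_congr
      intro p _
      exact and_congr_right fun _ => cond2 n p k
    rw [he, cntDiff n K hK]
  -- third card
  have hc3 : (((Finset.univ.filter fun p : Fin n × Fin n => p.1 < p.2).image
        fun p => (Pi.single p.1 1 : Fin n → ℚ) + Pi.single p.2 1).filter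
      fun v => (BB n).repr v k = 0).card
      = (univ.filter fun p : Fin n × Fin n => p.1 < p.2 ∧ K < p.1.1).card := by
    rw [Finset.filter_image, Finset.card_image_of_injOn ((inj3 n).mono (Finset.coe_subset.mpr (Finset.filter_subset _ _)))]
    rw [Finset.filter_filter]
    have he : (Finset.univ.filter fun p : Fin n × Fin n =>
        p.1 < p.2 ∧ (BB n).repr ((Pi.single p.1 1 : Fin n → ℚ) + Pi.single p.2 1) k = 0)
        = Finset.univ.filter fun p : Fin n × Fin n => p.1 < p.2 ∧ K < p.1.1 := by
      apply Finset.filter_congr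
      intro p _
      refine and_congr_right fun hlt => (cond3 n p k).trans ?_
      have : p.1.1 < p.2.1 := hlt
      constructor
      · intro h; exact h.1
      · intro h; exact ⟨h, by omega⟩
    rw [he]
  rw [hc1, hc2, hc3]
  have h2X := cnt2 n K hK
  have h2Y := cnt3 n K hK
  set X := (univ.filter fun p : Fin n × Fin n => p.1 < p.2 ∧ p.2.1 ≤ K).card
  set Y := (univ.filter fun p : Fin n × Fin n => p.1 < p.2 ∧ K < p.1.1).card
  have ha : n - (K + 1) = n - 1 - K := by omega
  have hb : n - 1 - (K + 1) = n - 1 - K - 1 := by omega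
  rw [ha, hb]
  obtain ⟨M, hM⟩ : ∃ M, (K + 1) * K = M := ⟨_, rfl⟩
  obtain ⟨N, hN⟩ : ∃ N, (n - 1 - K) * (n - 1 - K - 1) = N := ⟨_, rfl⟩
  rw [hM] at h2X ⊢
  rw [hN] at h2Y ⊢
  omega
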